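/- For w > 0 let g_w(x) = (1 + cos x − √((1 + cos x)² − 4·tanh²(w)·cos x))/(2·tanh w) and p_w(x) = arcosh((1 − g_w(x)·tanh w)/√(1 − tanh²w)). Then p_w is strictly monotonically increasing on the interval (0, π). -/

import Mathlib

noncomputable def arcosh (x : ℝ) : ℝ := Real.log (x + Real.sqrt (x ^ 2 - 1))

noncomputable def g (w x : ℝ) : ℝ :=
  (1 + Real.cos x -
      Real.sqrt ((1 + Real.cos x) ^ 2 - 4 * Real.tanh w ^ 2 * Real.cos x)) /
    (2 * Real.tanh w)

noncomputable def p (w x : ℝ) : ℝ :=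
  arcosh ((1 - g w x * Real.tanh w) / Real.sqrt (1 - Real.tanh w ^ 2))

private lemma arcosh_lt_arcosh {a b : ℝ} (ha : 1 ≤ a) (hab : a < b) :
    arcosh a < arcosh b := by
  unfold arcosh
  have h1 : 0 < a + Real.sqrt (a ^ 2 - 1) := by
    have := Real.sqrt_nonneg (a ^ 2 - 1); linarith
  apply Real.log_lt_log h1
  exact add_lt_add_of_lt_of_le hab (Real.sqrt_le_sqrt (by nlinarith))

/-- Key: the numerator `N t c = 1 + c - √((1+c)^2 - 4 t^2 c)` is strictly increasing in `c`. -/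
private lemma key {t c₁ c₂ : ℝ} (ht : 0 < t) (ht1 : t < 1) (hc1 : -1 ≤ c₁) (hc2 : c₂ ≤ 1)
    (h : c₁ < c₂) :
    1 + c₁ - Real.sqrt ((1 + c₁) ^ 2 - 4 * t ^ 2 * c₁) <
      1 + c₂ - Real.sqrt ((1 + c₂) ^ 2 - 4 * t ^ 2 * c₂) := by
  set D₁ := (1 + c₁) ^ 2 - 4 * t ^ 2 * c₁ with hD₁
  set D₂ := (1 + c₂) ^ 2 - 4 * t ^ 2 * c₂ with hD₂
  have hkey : (1 + c₁ - 2 * t ^ 2) ^ 2 < D₁ := by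
    have hid : D₁ - (1 + c₁ - 2 * t ^ 2) ^ 2 = 4 * t ^ 2 * (1 - t ^ 2) := by rw [hD₁]; ring
    nlinarith [mul_pos (mul_pos ht ht) (show (0:ℝ) < 1 - t ^ 2 by nlinarith)]
  have hs1 : 1 + c₁ - 2 * t ^ 2 < Real.sqrt D₁ := Real.lt_sqrt_of_sq_lt hkey
  have hD1nn : 0 ≤ D₁ := by nlinarith [sq_nonneg (1 + c₁ - 2 * t ^ 2)]
  have hsq : Real.sqrt D₁ ^ 2 = D₁ := Real.sq_sqrt hD1nn
  have hpos : 0 < Real.sqrt D₁ + (c₂ - c₁) := by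
    have := Real.sqrt_nonneg D₁; linarith
  have : Real.sqrt D₂ < Real.sqrt D₁ + (c₂ - c₁) := by
    rw [Real.sqrt_lt' hpos]
    have hsnn : 0 ≤ Real.sqrt D₁ := Real.sqrt_nonneg D₁
    nlinarith
  linarith

private lemma tanh_bounds {w : ℝ} (hw : 0 < w) : 0 < Real.tanh w ∧ Real.tanh w < 1 := by
  have hs : 0 < Real.sinh w := Real.sinh_pos_iff.2 hw
  have hc : 0 < Real.cosh w := Real.cosh_pos w
  have hsc : Real.sinh w < Real.cosh w := Real.sinh_lt_cosh w
  rw [Real.tanh_eq_sinh_div_cosh]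
  constructor
  · positivity
  · rw [div_lt_one hc]; exact hsc

theorem stmt_13 (w : ℝ) (hw : 0 < w) :
    StrictMonoOn (p w) (Set.Ioo 0 Real.pi) := by
  obtain ⟨ht, ht1⟩ := tanh_bounds hw
  set t := Real.tanh w with htdef
  have hst : 0 < Real.sqrt (1 - t ^ 2) := Real.sqrt_pos.2 (by nlinarith)
  -- numerator at c = 1
  have hN1 : Real.sqrt ((1 + (1:ℝ)) ^ 2 - 4 * t ^ 2 * 1) = 2 * Real.sqrt (1 - t ^ 2) := by
    rw [show (1 + (1:ℝ)) ^ 2 - 4 * t ^ 2 * 1 = 2 ^ 2 * (1 - t ^ 2) by ring,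
      Real.sqrt_mul (by norm_num), Real.sqrt_sq (by norm_num)]
  intro x₁ hx₁ x₂ hx₂ hlt
  obtain ⟨hx₁0, hx₁π⟩ := hx₁
  obtain ⟨hx₂0, hx₂π⟩ := hx₂
  have hc12 : Real.cos x₂ < Real.cos x₁ :=
    Real.cos_lt_cos_of_nonneg_of_le_pi hx₁0.le hx₂π.le hlt
  have hc1lt : Real.cos x₁ < 1 := by
    have := Real.cos_lt_cos_of_nonneg_of_le_pi le_rfl hx₁π.le hx₁0
    simpa using this
  have hc2b : -1 ≤ Real.cos x₂ := Real.neg_one_le_cos x₂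
  -- numerator comparisons
  have hmono : 1 + Real.cos x₂ - Real.sqrt ((1 + Real.cos x₂) ^ 2 - 4 * t ^ 2 * Real.cos x₂) <
      1 + Real.cos x₁ - Real.sqrt ((1 + Real.cos x₁) ^ 2 - 4 * t ^ 2 * Real.cos x₁) :=
    key ht ht1 hc2b hc1lt.le hc12
  have hub : 1 + Real.cos x₁ - Real.sqrt ((1 + Real.cos x₁) ^ 2 - 4 * t ^ 2 * Real.cos x₁) <
      1 + 1 - Real.sqrt ((1 + (1:ℝ)) ^ 2 - 4 * t ^ 2 * 1) :=
    key ht ht1 (Real.neg_one_le_cos x₁) le_rfl hc1lt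
  rw [hN1] at hub
  -- express g * t
  have hgt : ∀ x : ℝ, g w x * t =
      (1 + Real.cos x - Real.sqrt ((1 + Real.cos x) ^ 2 - 4 * t ^ 2 * Real.cos x)) / 2 := by
    intro x
    unfold g
    rw [← htdef]
    field_simp
  have hA12 : (1 - g w x₁ * t) / Real.sqrt (1 - t ^ 2) <
      (1 - g w x₂ * t) / Real.sqrt (1 - t ^ 2) := by
    apply div_lt_div_of_pos_right ?_ hst
    rw [hgt x₁, hgt x₂]; linarith
  have hA1 : 1 ≤ (1 - g w x₁ * t) / Real.sqrt (1 - t ^ 2) := by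
    rw [le_div_iff₀ hst, one_mul, hgt x₁]
    linarith
  show arcosh _ < arcosh _
  exact arcosh_lt_arcosh hA1 hA12
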